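/- Let V be a module over a commutative ring Z (acting by commuting endomorphisms), finite-dimensional over a field 𝕜 with Z acting 𝕜-linearly, and let χ : Z → 𝕜 be a character. Then the generalized χ-eigenspace W = {v ∈ V : ∀ z ∈ Z, ∃ k, (z - χ(z))^k v = 0} is a Z-submodule of V and is a direct summand of V as a Z-module. -/

import Mathlib

open Module LinearMap Set

section Aux

variable {𝕜 Z : Type*} [Field 𝕜] [CommRing Z] [Algebra 𝕜 Z]

/-- Restriction of an algebra representation to an invariant subspace. -/
def restrictAlgHom {V : Type*} [AddCommGroup V] [Module 𝕜 V]
    (ρ : Z →ₐ[𝕜] Module.End 𝕜 V) (K : Submodule 𝕜 V)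
    (h : ∀ z, ∀ x ∈ K, ρ z x ∈ K) : Z →ₐ[𝕜] Module.End 𝕜 K where
  toFun z := (ρ z).restrict (h z)
  map_one' := LinearMap.ext fun x => Subtype.ext (by
    rw [LinearMap.restrict_coe_apply, map_one]; rfl)
  map_mul' x y := LinearMap.ext fun v => Subtype.ext (by
    simp only [Module.End.mul_apply, LinearMap.restrict_coe_apply, map_mul])
  map_zero' := LinearMap.ext fun x => Subtype.ext (by
    rw [LinearMap.restrict_coe_apply, map_zero]; rfl)
  map_add' x y := LinearMap.ext fun v => Subtype.ext (by
    simp only [LinearMap.add_apply, LinearMap.restrict_coe_apply, map_add,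
      Submodule.coe_add])
  commutes' c := LinearMap.ext fun v => Subtype.ext (by
    simp only [LinearMap.restrict_coe_apply, AlgHom.commutes,
      Module.algebraMap_end_apply, Submodule.coe_smul])

lemma coe_sub_smul_pow_restrict_apply {V : Type*} [AddCommGroup V] [Module 𝕜 V]
    (f : Module.End 𝕜 V) (μ : 𝕜) (K : Submodule 𝕜 V) (h : ∀ x ∈ K, f x ∈ K) (k : ℕ) (y : K) :
    ((((f.restrict h) - μ • (1 : Module.End 𝕜 K)) ^ k) y : V)
      = ((f - μ • (1 : Module.End 𝕜 V)) ^ k) (y : V) := by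
  have h' : ∀ x ∈ K, (f - μ • (1 : Module.End 𝕜 V)) x ∈ K := fun x hx =>
    K.sub_mem (h x hx) (K.smul_mem μ hx)
  have heq : (f.restrict h) - μ • (1 : Module.End 𝕜 K)
      = (f - μ • (1 : Module.End 𝕜 V)).restrict h' := by
    rw [← LinearMap.restrict_smul_one μ]
    exact LinearMap.restrict_sub _ _
  rw [heq, Module.End.pow_restrict]
  rfl

@[simp] lemma restrictAlgHom_apply {V : Type*} [AddCommGroup V] [Module 𝕜 V]
    (ρ : Z →ₐ[𝕜] Module.End 𝕜 V) (K : Submodule 𝕜 V)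
    (h : ∀ z, ∀ x ∈ K, ρ z x ∈ K) (z : Z) :
    restrictAlgHom ρ K h z = (ρ z).restrict (h z) := rfl

theorem aux (χ : Z →ₐ[𝕜] 𝕜) (n : ℕ) :
    ∀ {V : Type*} [AddCommGroup V] [Module 𝕜 V] [FiniteDimensional 𝕜 V]
      (ρ : Z →ₐ[𝕜] Module.End 𝕜 V), finrank 𝕜 V ≤ n →
    ∃ q : Submodule 𝕜 V, (∀ z : Z, ∀ v ∈ q, ρ z v ∈ q) ∧
      IsCompl (⨅ z : Z, (ρ z).maxGenEigenspace (χ z)) q := by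
  induction n with
  | zero =>
    intro V _ _ _ ρ hn
    have hsub : Subsingleton V := by
      have : finrank 𝕜 V = 0 := Nat.le_zero.mp hn
      exact Module.finrank_zero_iff.mp this
    refine ⟨⊥, fun z v hv => by
      rw [Submodule.mem_bot] at hv ⊢
      rw [hv, map_zero], ?_⟩
    have hp : (⨅ z : Z, (ρ z).maxGenEigenspace (χ z)) = ⊤ := by
      refine eq_top_iff.mpr fun x _ => ?_
      have : x = 0 := Subsingleton.elim x 0
      simp [this]
    rw [hp]
    exact isCompl_top_bot
  | succ n ih =>
    intro V _ _ _ ρ hn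
    set p := ⨅ z : Z, (ρ z).maxGenEigenspace (χ z) with hp_def
    by_cases hp : p = ⊤
    · refine ⟨⊥, fun z v hv => by
        rw [Submodule.mem_bot] at hv ⊢
        rw [hv, map_zero], by rw [hp]; exact isCompl_top_bot⟩
    · -- there is some z₀ whose generalized eigenspace is proper
      have hex : ∃ z₀ : Z, (ρ z₀).maxGenEigenspace (χ z₀) ≠ ⊤ := by
        by_contra hc
        push_neg at hc
        exact hp (by simp [hp_def, iInf_eq_top, hc])
      obtain ⟨z₀, hz₀⟩ := hex
      set K := (ρ z₀).maxGenEigenspace (χ z₀) with hK_def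
      set f := ρ z₀ - χ z₀ • (1 : Module.End 𝕜 V) with hf_def
      have hKeq : K = ⨆ k : ℕ, LinearMap.ker (f ^ k) := by
        rw [hK_def, ← Module.End.iSup_genEigenspace_eq]
        simp only [Module.End.genEigenspace_nat, hf_def]
      set R := ⨅ k : ℕ, LinearMap.range (f ^ k) with hR_def
      have hComp : IsCompl K R := by
        rw [hKeq]; exact LinearMap.isCompl_iSup_ker_pow_iInf_range_pow f
      -- commuting facts
      have hcomm : ∀ z z' : Z, Commute (ρ z) (ρ z') := fun z z' => by
        rw [commute_iff_eq, ← map_mul, ← map_mul, mul_comm]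
      have hcommf : ∀ z : Z, Commute (ρ z) f := fun z => by
        rw [hf_def]
        exact (hcomm z z₀).sub_right ((Commute.one_right (ρ z)).smul_right (χ z₀))
      -- K is stable
      have hKstab : ∀ z : Z, ∀ x ∈ K, ρ z x ∈ K := fun z x hx =>
        Module.End.mapsTo_maxGenEigenspace_of_comm ((hcomm z₀ z)) (χ z₀) hx
      -- R is stable
      have hRstab : ∀ z : Z, ∀ x ∈ R, ρ z x ∈ R := by
        intro z x hx
        rw [hR_def, Submodule.mem_iInf] at hx ⊢
        intro k
        obtain ⟨y, hy⟩ := hx k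
        refine ⟨ρ z y, ?_⟩
        have hc := DFunLike.congr_fun ((hcommf z).pow_right k) y
        simp only [Module.End.mul_apply] at hc
        rw [← hy]
        exact hc.symm
      -- the restricted representation
      set ρ' := restrictAlgHom ρ K hKstab with hρ'_def
      have hfinK : finrank 𝕜 K ≤ n := by
        have : finrank 𝕜 K < finrank 𝕜 V := Submodule.finrank_lt hz₀
        omega
      obtain ⟨q', hq'stab, hq'compl⟩ := ih ρ' hfinK
      set p' := ⨅ z : Z, (ρ' z).maxGenEigenspace (χ z) with hp'_def
      -- p sits inside K
      have hpK : p ≤ K := iInf_le _ z₀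
      -- the image of p' is p
      have hmap : p'.map K.subtype = p := by
        ext x
        constructor
        · rintro ⟨y, hy, rfl⟩
          rw [hp_def, Submodule.mem_iInf]
          intro z
          simp only [SetLike.mem_coe, Submodule.mem_iInf, hp'_def] at hy
          obtain ⟨k, hk⟩ := (Module.End.mem_maxGenEigenspace _ _ _).mp (hy z)
          refine (Module.End.mem_maxGenEigenspace _ _ _).mpr ⟨k, ?_⟩
          have := congrArg (Subtype.val) hk
          simp only [hρ'_def, restrictAlgHom_apply, coe_sub_smul_pow_restrict_apply,
            ZeroMemClass.coe_zero] at this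
          simpa [Submodule.subtype_apply] using this
        · intro hx
          refine ⟨⟨x, hpK hx⟩, ?_, rfl⟩
          simp only [SetLike.mem_coe, Submodule.mem_iInf, hp'_def]
          intro z
          rw [hp_def, Submodule.mem_iInf] at hx
          obtain ⟨k, hk⟩ := (Module.End.mem_maxGenEigenspace _ _ _).mp (hx z)
          refine (Module.End.mem_maxGenEigenspace _ _ _).mpr ⟨k, ?_⟩
          apply Subtype.ext
          simp only [hρ'_def, restrictAlgHom_apply, coe_sub_smul_pow_restrict_apply,
            ZeroMemClass.coe_zero]
          exact hk
      refine ⟨q'.map K.subtype ⊔ R, ?_, ?_⟩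
      · -- stability of the complement
        intro z v hv
        obtain ⟨a, ha, r, hr, rfl⟩ := Submodule.mem_sup.mp hv
        rw [map_add]
        refine Submodule.add_mem_sup ?_ (hRstab z r hr)
        obtain ⟨b, hb, rfl⟩ := ha
        refine ⟨ρ' z b, hq'stab z b hb, rfl⟩
      · constructor
        · -- disjointness
          rw [disjoint_iff_inf_le]
          intro x ⟨hxp, hxq⟩
          obtain ⟨a, ha, r, hr, rfl⟩ := Submodule.mem_sup.mp hxq
          have haK : a ∈ K := by
            obtain ⟨b, _, rfl⟩ := ha
            exact b.2
          have hrK : r ∈ K := by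
            have : (a + r) - a ∈ K := K.sub_mem (hpK hxp) haK
            simpa using this
          have hr0 : r = 0 := by
            have := hComp.disjoint
            rw [disjoint_iff_inf_le] at this
            exact (Submodule.mem_bot 𝕜).mp (this ⟨hrK, hr⟩)
          subst hr0
          rw [add_zero] at hxp ⊢
          obtain ⟨b, hb, rfl⟩ := ha
          have hbp' : b ∈ p' := by
            rw [← hmap] at hxp
            obtain ⟨c, hc, hcb⟩ := hxp
            have : c = b := Subtype.ext hcb
            rwa [← this]
          have : b ∈ p' ⊓ q' := ⟨hbp', hb⟩
          have hb0 : b = 0 := by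
            have hd := hq'compl.disjoint
            rw [disjoint_iff_inf_le] at hd
            exact (Submodule.mem_bot 𝕜).mp (hd this)
          simp [hb0]
        · -- codisjointness
          rw [codisjoint_iff, ← sup_assoc, ← hmap, ← Submodule.map_sup,
            codisjoint_iff.mp hq'compl.codisjoint, Submodule.map_top,
            Submodule.range_subtype]
          exact codisjoint_iff.mp hComp.codisjoint

end Aux

/-- Let a commutative algebra `Z` act `𝕜`-linearly on a finite-dimensional vector
space `V` (via `ρ`), and let `χ : Z → 𝕜` be a character. Then the generalized
`χ`-eigenspace `{v : ∀ z, ∃ k, (ρ z - χ z)^k v = 0}` is a `Z`-stable subspace of `V`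
admitting a `Z`-stable complement (i.e. it is a direct summand as a `Z`-module). -/
theorem stmt_13 {𝕜 Z V : Type*} [Field 𝕜] [CommRing Z] [Algebra 𝕜 Z]
    [AddCommGroup V] [Module 𝕜 V] [FiniteDimensional 𝕜 V]
    (ρ : Z →ₐ[𝕜] Module.End 𝕜 V) (χ : Z →ₐ[𝕜] 𝕜)
    (Wset : Set V)
    (hW : Wset = {v : V | ∀ z : Z, ∃ k : ℕ, ((ρ z - χ z • (1 : Module.End 𝕜 V)) ^ k) v = 0}) :
    ∃ p : Submodule 𝕜 V, (p : Set V) = Wset ∧ (∀ z : Z, ∀ v ∈ p, ρ z v ∈ p) ∧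
      ∃ q : Submodule 𝕜 V, (∀ z : Z, ∀ v ∈ q, ρ z v ∈ q) ∧ IsCompl p q := by
  refine ⟨⨅ z : Z, (ρ z).maxGenEigenspace (χ z), ?_, ?_, ?_⟩
  · ext v
    simp [hW, Submodule.mem_iInf, Module.End.mem_maxGenEigenspace]
  · intro z v hv
    rw [Submodule.mem_iInf] at hv ⊢
    intro z'
    have hcomm : Commute (ρ z') (ρ z) := by
      rw [commute_iff_eq, ← map_mul, ← map_mul, mul_comm]
    exact Module.End.mapsTo_maxGenEigenspace_of_comm hcomm (χ z') (hv z')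
  · obtain ⟨q, hq1, hq2⟩ := aux χ (finrank 𝕜 V) ρ le_rfl
    exact ⟨q, hq1, hq2⟩
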